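/- Let W ∈ ℝ^{n×n} be symmetric positive definite, A ∈ ℝ^{m×n}, and for each k let S_k ∈ ℝ^{m×k} be nested sketches (S_{k−1} equals the first k−1 columns of S_k). Suppose for each i ≤ k the update is p_i = W Aᵀ S_i (S_iᵀ A W Aᵀ S_i)⁻¹ S_iᵀ r_{i−1} (with the inner matrix invertible), and suppose S_kᵀ r_{i−1} = δ_i e_i for scalars δ_i (e_i the i-th standard basis vector in ℝ^k). Then the updates are W⁻¹-orthogonal: p_iᵀ W⁻¹ p_j = 0 for all 1 ≤ i < j ≤ k. -/

import Mathlib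

open Matrix

/-- Nested-sketch updates with sketched residuals along basis directions are
`W⁻¹`-orthogonal. -/
theorem updates_W_orthogonal (m n k : ℕ)
    (W : Matrix (Fin n) (Fin n) ℝ) (hW : W.PosDef)
    (A : Matrix (Fin m) (Fin n) ℝ)
    (S : Matrix (Fin m) (Fin k) ℝ)
    -- E i selects the first i+1 columns (columns e_1, …, e_{i+1})
    (E : (i : Fin k) → Matrix (Fin k) (Fin (i + 1)) ℝ)
    (hE : ∀ (i : Fin k) (a : Fin k) (b : Fin (i + 1)), E i a b = if (a : ℕ) = (b : ℕ) then 1 else 0)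
    -- r i denotes r_{i-1}, the residual used to produce update p_i
    (r : Fin k → Fin m → ℝ) (δ : Fin k → ℝ) (p : Fin k → Fin n → ℝ)
    (hinv : ∀ i : Fin k,
      IsUnit ((S * E i)ᵀ * A * W * Aᵀ * (S * E i)).det)
    (hp : ∀ i : Fin k,
      p i = (W * Aᵀ * (S * E i) *
        ((S * E i)ᵀ * A * W * Aᵀ * (S * E i))⁻¹ * (S * E i)ᵀ).mulVec (r i))
    (hres : ∀ i : Fin k, Sᵀ.mulVec (r i) = δ i • (Pi.single i 1 : Fin k → ℝ)) :
    ∀ i j : Fin k, i < j → p i ⬝ᵥ W⁻¹.mulVec (p j) = 0 := by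
  intro i j hij
  have hWt : Wᵀ = W := by simpa using hW.isHermitian.eq
  have hWdet : IsUnit W.det := isUnit_iff_ne_zero.mpr (ne_of_gt hW.det_pos)
  set Si : Matrix (Fin m) (Fin (i + 1)) ℝ := S * E i with hSi
  set Sj : Matrix (Fin m) (Fin (j + 1)) ℝ := S * E j with hSj
  set Mi : Matrix (Fin (i + 1)) (Fin (i + 1)) ℝ := Siᵀ * A * W * Aᵀ * Si with hMi
  set Mj : Matrix (Fin (j + 1)) (Fin (j + 1)) ℝ := Sjᵀ * A * W * Aᵀ * Sj with hMj
  -- The embedding matrix F with E i = E j * F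
  set F : Matrix (Fin (j + 1)) (Fin (i + 1)) ℝ :=
    fun a b => if (a : ℕ) = (b : ℕ) then 1 else 0 with hF
  have hEF : E i = E j * F := by
    ext a b
    rw [mul_apply]; simp only [hE, hF]
    by_cases ha : (a : ℕ) < j + 1
    · rw [Finset.sum_eq_single (⟨(a : ℕ), ha⟩ : Fin (j + 1))]
      · simp
      · intro c _ hc
        have : (a : ℕ) ≠ (c : ℕ) := by
          intro h
          exact hc (by apply Fin.ext; simp [← h])
        simp [this]
      · simp
    · have hb : (a : ℕ) ≠ (b : ℕ) := by
        intro h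
        exact ha (h ▸ b.isLt.trans_le (by omega))
      rw [if_neg hb]
      symm
      apply Finset.sum_eq_zero
      intro c _
      have : (a : ℕ) ≠ (c : ℕ) := fun h => ha (h ▸ c.isLt)
      simp [this]
  have hSiF : Si = Sj * F := by rw [hSi, hSj, hEF, Matrix.mul_assoc]
  -- key matrix identity
  have key : (W * Aᵀ * Si * Mi⁻¹ * Siᵀ)ᵀ * (W⁻¹ * (W * Aᵀ * Sj * Mj⁻¹ * Sjᵀ)) =
      Si * Mi⁻¹ᵀ * Siᵀ := by
    have h1 : W⁻¹ * (W * Aᵀ * Sj * Mj⁻¹ * Sjᵀ) = Aᵀ * Sj * Mj⁻¹ * Sjᵀ := by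
      rw [show W * Aᵀ * Sj * Mj⁻¹ * Sjᵀ = W * (Aᵀ * Sj * Mj⁻¹ * Sjᵀ) by
        simp only [Matrix.mul_assoc], ← Matrix.mul_assoc, nonsing_inv_mul W hWdet,
        Matrix.one_mul]
    rw [h1]
    have h2 : (W * Aᵀ * Si * Mi⁻¹ * Siᵀ)ᵀ = Si * Mi⁻¹ᵀ * (Siᵀ * A * W) := by
      simp only [Matrix.transpose_mul, Matrix.transpose_transpose, hWt, Matrix.mul_assoc]
    rw [h2]
    have h3 : Siᵀ * A * W * (Aᵀ * Sj * Mj⁻¹ * Sjᵀ) = Siᵀ := by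
      have h4 : Siᵀ * A * W * (Aᵀ * Sj * Mj⁻¹ * Sjᵀ) =
          (Siᵀ * A * W * Aᵀ * Sj) * Mj⁻¹ * Sjᵀ := by
        simp only [Matrix.mul_assoc]
      have h5 : Siᵀ * A * W * Aᵀ * Sj = Fᵀ * Mj := by
        rw [hMj, hSiF]
        simp only [Matrix.transpose_mul, Matrix.mul_assoc]
      rw [h4, h5, Matrix.mul_assoc Fᵀ, mul_nonsing_inv Mj (hinv j), Matrix.mul_one,
        ← Matrix.transpose_mul, ← hSiF]
    calc Si * Mi⁻¹ᵀ * (Siᵀ * A * W) * (Aᵀ * Sj * Mj⁻¹ * Sjᵀ)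
        = Si * Mi⁻¹ᵀ * (Siᵀ * A * W * (Aᵀ * Sj * Mj⁻¹ * Sjᵀ)) := by
          simp only [Matrix.mul_assoc]
      _ = Si * Mi⁻¹ᵀ * Siᵀ := by rw [h3]
  -- the sketched residual orthogonality
  have hz : Siᵀ.mulVec (r j) = 0 := by
    have : Siᵀ = (E i)ᵀ * Sᵀ := by rw [hSi, Matrix.transpose_mul]
    rw [this, ← Matrix.mulVec_mulVec, hres j, Matrix.mulVec_smul]
    have : (E i)ᵀ.mulVec (Pi.single j 1 : Fin k → ℝ) = 0 := by
      rw [Matrix.mulVec_single]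
      funext b
      have hne : (j : ℕ) ≠ (b : ℕ) := by
        have := b.isLt
        have := hij
        omega
      simp [Matrix.transpose_apply, hE, hne]
    rw [this, smul_zero]
  rw [hp i, hp j, Matrix.mulVec_mulVec, Matrix.dotProduct_mulVec,
    ← Matrix.vecMul_transpose, Matrix.vecMul_vecMul]
  simp only [← hSi, ← hSj]
  rw [key, ← Matrix.dotProduct_mulVec, ← Matrix.mulVec_mulVec, hz, Matrix.mulVec_zero,
    dotProduct_zero]
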